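/- Let q = Σ_{d=0}^{N} q_d be a noncommutative polynomial in variables x, y with each q_d being d-homogeneous in y and N ≥ 1, and let q̃(x,y,h) := Σ_{d=0}^{N} h^{N−d} q_d(x,y). Let φ : A → B be a *-homomorphism, let x̄ ∈ A^p, ȳ ∈ B^q satisfy q(φ(x̄), ȳ) = 0. In the mapping cylinder Z_{φ⁺} = {(a,f) ∈ A ⊕ C([0,1],B⁺) : φ⁺(a) = f(0)}, define x̃ᵢ = (x̄ᵢ, constant function φ(x̄ᵢ)), ỹⱼ = (0, t ↦ t·ȳⱼ), and h̃ = (0, t ↦ t·1_{B⁺}). Then q̃(x̃, ỹ, h̃) = 0, provided also q_N(x̄, 0) = 0. -/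

import Mathlib

set_option synthInstance.maxHeartbeats 1000000
set_option maxHeartbeats 2000000

open scoped unitInterval

noncomputable section

/-- The algebra endomorphism of the free algebra on variables `x ⊕ y` rescaling each
`y`-variable by `c`. A noncommutative polynomial `q` is `d`-homogeneous in the
`y`-variables iff `yScale c q = c ^ d • q` for all `c`. -/
def yScale (p q : ℕ) (c : ℂ) :
    FreeAlgebra ℂ (Fin p ⊕ Fin q) →ₐ[ℂ] FreeAlgebra ℂ (Fin p ⊕ Fin q) :=
  FreeAlgebra.lift ℂ (Sum.elim (fun i => FreeAlgebra.ι ℂ (Sum.inl i))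
    (fun j => c • FreeAlgebra.ι ℂ (Sum.inr j)))

/-- Evaluation of a noncommutative polynomial at `X`, `Y` in an algebra `R`. -/
def ncEval {p q : ℕ} {R : Type*} [Ring R] [Algebra ℂ R]
    (X : Fin p → R) (Y : Fin q → R) : FreeAlgebra ℂ (Fin p ⊕ Fin q) →ₐ[ℂ] R :=
  FreeAlgebra.lift ℂ (Sum.elim X Y)

/-- The function `h̃₂(t) = t·1` in `C([0,1], B⁺)`. -/
def tOne (B : Type*) [NonUnitalCStarAlgebra B] : C(unitInterval, Unitization ℂ B) :=
  ⟨fun t => (t : ℝ) • (1 : Unitization ℂ B),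
    Continuous.smul continuous_subtype_val continuous_const⟩

/-- The function `ỹ₂(t) = t·y` in `C([0,1], B⁺)`. -/
def tScale {B : Type*} [NonUnitalCStarAlgebra B] (y : B) :
    C(unitInterval, Unitization ℂ B) :=
  ⟨fun t => (t : ℝ) • (y : Unitization ℂ B),
    Continuous.smul continuous_subtype_val continuous_const⟩

lemma ncEval_ι_inl {p q : ℕ} {R : Type*} [Ring R] [Algebra ℂ R]
    (X : Fin p → R) (Y : Fin q → R) (i : Fin p) :
    ncEval X Y (FreeAlgebra.ι ℂ (Sum.inl i)) = X i := by
  simp [ncEval, FreeAlgebra.lift_ι_apply]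

lemma ncEval_comp {p q : ℕ} {R S : Type*} [Ring R] [Algebra ℂ R] [Ring S] [Algebra ℂ S]
    (g : R →ₐ[ℂ] S) (X : Fin p → R) (Y : Fin q → R) :
    g.comp (ncEval X Y) = ncEval (fun i => g (X i)) (fun j => g (Y j)) := by
  apply FreeAlgebra.hom_ext
  funext z
  cases z <;> simp [ncEval, FreeAlgebra.lift_ι_apply]

lemma ncEval_yScale {p q : ℕ} {R : Type*} [Ring R] [Algebra ℂ R]
    (X : Fin p → R) (Y : Fin q → R) (c : ℂ) :
    (ncEval X Y).comp (yScale p q c) = ncEval X (fun j => c • Y j) := by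
  apply FreeAlgebra.hom_ext
  funext z
  cases z <;> simp [ncEval, yScale, FreeAlgebra.lift_ι_apply]

/-- Evaluation at a point as a non-unital algebra hom (no commutativity needed). -/
def evalNAH {R : Type*} [NonUnitalNonAssocSemiring R] [TopologicalSpace R]
    [IsTopologicalSemiring R] [Module ℂ R] [ContinuousConstSMul ℂ R]
    (t : unitInterval) : C(unitInterval, R) →ₙₐ[ℂ] R where
  toFun f := f t
  map_smul' _ _ := rfl
  map_zero' := rfl
  map_add' _ _ := rfl
  map_mul' _ _ := rfl

/-- with `q = Σ_{d=0}^N q_d`, `q_d` `d`-homogeneous in `y`, `N ≥ 1`,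
`q(φ(x̄), ȳ) = 0` and `q_N(x̄, 0) = 0`, the elements `x̃ᵢ = (x̄ᵢ, const φ(x̄ᵢ))`,
`ỹⱼ = (0, t ↦ t·ȳⱼ)`, `h̃ = (0, t ↦ t·1)` of the mapping cylinder `Z_{φ⁺}` satisfy
`q̃(x̃, ỹ, h̃) = Σ_{d=0}^N h̃^{N-d} q_d(x̃, ỹ) = 0` (computed in the unitization of the
ambient algebra `A ⊕ C([0,1], B⁺)`). -/
theorem homogenized_relation_in_mapping_cylinder
    {A B : Type*} [NonUnitalCStarAlgebra A] [NonUnitalCStarAlgebra B]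
    (φ : A →⋆ₙₐ[ℂ] B) {p q N : ℕ} (hN : 1 ≤ N)
    (qd : ℕ → FreeAlgebra ℂ (Fin p ⊕ Fin q))
    (hhom : ∀ d ≤ N, ∀ c : ℂ, yScale p q c (qd d) = c ^ d • qd d)
    (hconst : ∀ d ≤ N, FreeAlgebra.algebraMapInv (qd d) = 0)
    (xb : Fin p → A) (yb : Fin q → B)
    (hq : ncEval (fun i => ((φ (xb i) : Unitization ℂ B)))
        (fun j => ((yb j : Unitization ℂ B)))
        (∑ d ∈ Finset.range (N + 1), qd d) = 0)
    (hqN : ncEval (fun i => ((xb i : Unitization ℂ A))) (fun _ => (0 : Unitization ℂ A))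
        (qd N) = 0) :
    ∑ d ∈ Finset.range (N + 1),
      (Unitization.inr ((0, tOne B) : A × C(unitInterval, Unitization ℂ B))
          : Unitization ℂ (A × C(unitInterval, Unitization ℂ B))) ^ (N - d)
        * ncEval
            (fun i => Unitization.inr
              ((xb i, ContinuousMap.const unitInterval ((φ (xb i) : Unitization ℂ B)))
                : A × C(unitInterval, Unitization ℂ B)))
            (fun j => Unitization.inr
              ((0, tScale (yb j)) : A × C(unitInterval, Unitization ℂ B)))
            (qd d) = 0 := by
  set M := A × C(unitInterval, Unitization ℂ B) with hM
  set X : Fin p → Unitization ℂ M := fun i => Unitization.inr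
      ((xb i, ContinuousMap.const unitInterval ((φ (xb i) : Unitization ℂ B))) : M)
  set Y : Fin q → Unitization ℂ M := fun j => Unitization.inr ((0, tScale (yb j)) : M)
  set h : Unitization ℂ M := Unitization.inr ((0, tOne B) : M)
  set z : Unitization ℂ M := ∑ d ∈ Finset.range (N + 1), h ^ (N - d) * ncEval X Y (qd d)
    with hz
  -- the two homomorphisms
  let ψ₁ : M →ₙₐ[ℂ] Unitization ℂ A :=
    (Unitization.inrNonUnitalAlgHom ℂ A).comp (NonUnitalAlgHom.fst ℂ A _)
  let Φ₁ : Unitization ℂ M →ₐ[ℂ] Unitization ℂ A := Unitization.lift ψ₁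
  let ψ₂ : unitInterval → (M →ₙₐ[ℂ] Unitization ℂ B) := fun t =>
    (evalNAH t).comp (NonUnitalAlgHom.snd ℂ A _)
  let Φ₂ : unitInterval → (Unitization ℂ M →ₐ[ℂ] Unitization ℂ B) := fun t =>
    Unitization.lift (ψ₂ t)
  have hΦ₁ : ∀ m : M, Φ₁ (Unitization.inr m) = Unitization.inr m.1 := by
    intro m
    simp only [Φ₁, Unitization.lift_apply, NonUnitalAlgHom.toAlgHom_apply, Unitization.fst_inr, map_zero,
      Unitization.snd_inr, zero_add]
    rfl
  have hΦ₂ : ∀ t (m : M), Φ₂ t (Unitization.inr m) = m.2 t := by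
    intro t m
    simp only [Φ₂, Unitization.lift_apply, NonUnitalAlgHom.toAlgHom_apply, Unitization.fst_inr, map_zero,
      Unitization.snd_inr, zero_add]
    rfl
  have h1 : Φ₁ z = 0 := by
    rw [hz, map_sum]
    rw [Finset.sum_eq_single_of_mem N (Finset.self_mem_range_succ N)]
    · have hX : (fun i => Φ₁ (X i)) = fun i => ((xb i : Unitization ℂ A)) := by
        funext i; exact hΦ₁ _
      have hY : (fun j => Φ₁ (Y j)) = fun _ => (0 : Unitization ℂ A) := by
        funext j; rw [hΦ₁]; exact Unitization.inr_zero ℂ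
      have := congrFun (congrArg DFunLike.coe (ncEval_comp Φ₁ X Y)) (qd N)
      simp only [AlgHom.comp_apply] at this
      rw [map_mul, map_pow, this, hX, hY, hqN, mul_zero]
    · intro d hd hdN
      have hd' := Finset.mem_range.mp hd
      have hpow : Φ₁ h = 0 := by rw [hΦ₁]; exact Unitization.inr_zero ℂ
      rw [map_mul, map_pow, hpow, zero_pow (by omega), zero_mul]
  have h2 : ∀ t : unitInterval, Φ₂ t z = 0 := by
    intro t
    set c : ℂ := ((t : ℝ) : ℂ) with hc
    have hsm : ∀ x : Unitization ℂ B, (t : ℝ) • x = c • x := fun x => by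
      rw [← algebraMap_smul ℂ ((t : ℝ)) x, Complex.coe_algebraMap]
    have hh : Φ₂ t h = c • 1 := by rw [hΦ₂]; exact hsm 1
    have hX : (fun i => Φ₂ t (X i)) = fun i => ((φ (xb i) : Unitization ℂ B)) := by
      funext i; exact hΦ₂ t _
    have hY : (fun j => Φ₂ t (Y j)) = fun j => c • ((yb j : Unitization ℂ B)) := by
      funext j; rw [hΦ₂]; exact hsm _
    rw [hz, map_sum]
    have key : ∀ d ∈ Finset.range (N + 1),
        Φ₂ t (h ^ (N - d) * ncEval X Y (qd d))
          = c ^ N • ncEval (fun i => ((φ (xb i) : Unitization ℂ B)))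
              (fun j => ((yb j : Unitization ℂ B))) (qd d) := by
      intro d hd
      rw [Finset.mem_range, Nat.lt_succ_iff] at hd
      have := congrFun (congrArg DFunLike.coe (ncEval_comp (Φ₂ t) X Y)) (qd d)
      simp only [AlgHom.comp_apply] at this
      rw [map_mul, map_pow, this, hX, hY, hh]
      have hy2 := congrFun (congrArg DFunLike.coe
        (ncEval_yScale (fun i => ((φ (xb i) : Unitization ℂ B)))
          (fun j => ((yb j : Unitization ℂ B))) c)) (qd d)
      simp only [AlgHom.comp_apply] at hy2
      rw [← hy2, hhom d hd c, map_smul, smul_pow, one_pow, smul_mul_assoc, one_mul,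
        smul_smul, ← pow_add, Nat.sub_add_cancel hd]
    rw [Finset.sum_congr rfl key, ← Finset.smul_sum, ← map_sum, hq, smul_zero]
  -- extract components
  have hΦ₁z : Φ₁ z = Unitization.inl z.fst + Unitization.inr z.snd.1 := by
    simp only [Φ₁, Unitization.lift_apply, NonUnitalAlgHom.toAlgHom_apply, Unitization.algebraMap_eq_inl]
    rfl
  have hfst1 : z.fst = 0 := by
    have := congrArg (fun x : Unitization ℂ A => x.fst) (hΦ₁z.symm.trans h1)
    simpa using this
  have hfst2 : z.snd.1 = 0 := by
    have := congrArg (fun x : Unitization ℂ A => x.snd) (hΦ₁z.symm.trans h1)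
    simpa using this
  have hsnd2 : z.snd.2 = 0 := by
    refine ContinuousMap.ext fun t => ?_
    have h2t := h2 t
    have : Φ₂ t z = algebraMap ℂ (Unitization ℂ B) z.fst + z.snd.2 t := by
      simp only [Φ₂, Unitization.lift_apply, NonUnitalAlgHom.toAlgHom_apply]; rfl
    rw [this, hfst1, map_zero, zero_add] at h2t
    simpa using h2t
  have : z = 0 := Unitization.ext hfst1 (Prod.ext hfst2 hsnd2)
  exact this
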